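/- Let Y be a finite set and A ∈ DCCone(Y) nonempty. Then I(A) = sup_{p_T} inf_{p_{Y|T}} I(T;Y), where the supremum is over finitely supported probability mass functions p_T on A, the infimum is over kernels p_{Y|T} assigning to each t ∈ A a distribution p_{Y|T}(·|t) ∈ Δ_Y satisfying ⟨t, p_{Y|T}(·|t)⟩ ≤ 0 for every t ∈ A (the infimum being +∞ if no such kernel exists), and I(T;Y) is the mutual information of (T,Y) with T ∼ p_T and Y given T = t distributed as p_{Y|T}(·|t). -/

import Mathlib

open scoped BigOperators

noncomputable section

/-- `A ⊆ ℝ^Y` is a pricing downward closed (DC) cone. -/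
def IsDCCone {Y : Type*} (A : Set (Y → ℝ)) : Prop :=
  (∀ a ∈ A, ∀ γ : ℝ, 0 ≤ γ → γ • a ∈ A) ∧
  (∀ a ∈ A, ∀ b : Y → ℝ, (∀ y, 0 ≤ b y) → a - b ∈ A)

/-- Probability mass functions on a finite set `Y`. -/
def probSimplex (Y : Type*) [Fintype Y] : Set (Y → ℝ) :=
  {p | (∀ y, 0 ≤ p y) ∧ ∑ y, p y = 1}

/-- KL divergence in bits, valued in the extended reals. -/
def KLdiv {Y : Type*} [Fintype Y] (p q : Y → ℝ) : EReal :=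
  if ∀ y, q y = 0 → p y = 0 then
    (((∑ y, if p y = 0 then 0 else p y * Real.logb 2 (p y / q y)) : ℝ) : EReal)
  else ⊤

/-- Information capacity `I(A)` of a pricing DC cone `A`.  The conventions
`I(∅) = -∞` and `I(ℝ^Y) = +∞` follow from `⨆ (empty) = ⊥` and `⨅ (empty) = ⊤`. -/
def infoCap {Y : Type*} [Fintype Y] (A : Set (Y → ℝ)) : EReal :=
  ⨅ q ∈ probSimplex Y, ⨆ a ∈ A,
    ⨅ p ∈ {p ∈ probSimplex Y | ∑ y, p y * a y ≤ 0}, KLdiv p q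

/-- Finitely supported probability mass functions supported inside a set `S`. -/
def finPMFOn {α : Type*} (S : Set α) : Set (α → ℝ) :=
  {p | (∀ a, 0 ≤ p a) ∧ (Function.support p).Finite ∧
    Function.support p ⊆ S ∧ ∑ᶠ a, p a = 1}

/-- Mutual information `I(T;Y)` in bits, where `T ∼ p_T` is a finitely supported random
portfolio and `Y` given `T = t` is distributed as the kernel `k t ∈ Δ_Y`; terms with
`k t y = 0` are taken to be `0`, and `p_Y(y) = Σ_t p_T(t) k t y`. -/
def mutualInfoTY {Y : Type*} [Fintype Y]
    (pT : (Y → ℝ) → ℝ) (k : (Y → ℝ) → Y → ℝ) : ℝ :=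
  ∑ᶠ t, ∑ y,
    (if k t y = 0 then 0 else
      pT t * k t y * Real.logb 2 (k t y / (∑ᶠ s, pT s * k s y)))

section Aux

open Real Set Topology Filter

variable {Y : Type*} [Fintype Y]

/-! ### EReal helpers -/

lemma IC_le_of_forall_real_gt {x y : EReal}
    (h : ∀ c : ℝ, y < (c : EReal) → x ≤ (c : EReal)) : x ≤ y := by
  by_contra hlt
  push_neg at hlt
  rcases EReal.lt_iff_exists_real_btwn.1 hlt with ⟨c, hyc, hcx⟩
  exact absurd (h c hyc) (not_le.mpr hcx)

lemma IC_le_of_forall_real_lt {x y : EReal}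
    (h : ∀ c : ℝ, (c : EReal) < x → (c : EReal) ≤ y) : x ≤ y := by
  by_contra hlt
  push_neg at hlt
  rcases EReal.lt_iff_exists_real_btwn.1 hlt with ⟨c, hyc, hcx⟩
  exact absurd (h c hcx) (not_le.mpr hyc)

lemma IC_le_coe_of_forall_add {x : EReal} {b : ℝ}
    (h : ∀ δ : ℝ, 0 < δ → x ≤ ((b + δ : ℝ) : EReal)) : x ≤ (b : EReal) := by
  apply IC_le_of_forall_real_gt
  intro c hc
  rw [EReal.coe_lt_coe_iff] at hc
  have h2 := h (c - b) (by linarith)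
  rwa [show b + (c - b) = c by ring] at h2

lemma IC_coe_le_of_forall_sub {x : EReal} {b : ℝ}
    (h : ∀ δ : ℝ, 0 < δ → ((b - δ : ℝ) : EReal) ≤ x) : (b : EReal) ≤ x := by
  by_contra hlt
  push_neg at hlt
  rcases EReal.lt_iff_exists_real_btwn.1 hlt with ⟨c, hyc, hcx⟩
  rw [EReal.coe_lt_coe_iff] at hcx
  have h2 := h (b - c) (by linarith)
  rw [show b - (b - c) = c by ring] at h2
  exact absurd h2 (not_le.mpr hyc)

/-! ### Gibbs' inequality and basic KL facts -/

lemma IC_gibbs {p q : Y → ℝ} (hp0 : ∀ y, 0 ≤ p y) (hp1 : ∑ y, p y = 1)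
    (hq0 : ∀ y, 0 ≤ q y) (hq1 : ∑ y, q y ≤ 1) (hpq : ∀ y, p y ≠ 0 → 0 < q y) :
    ∑ y, p y * Real.logb 2 (q y / p y) ≤ 0 := by
  have hl2 : (0:ℝ) < Real.log 2 := Real.log_pos one_lt_two
  have key : ∀ y, p y * Real.logb 2 (q y / p y) ≤ (q y - p y) / Real.log 2 := by
    intro y
    rcases eq_or_lt_of_le (hp0 y) with h0 | h0
    · rw [← h0, zero_mul, sub_zero]
      exact div_nonneg (hq0 y) hl2.le
    · have hq := hpq y (ne_of_gt h0)
      have hd : 0 < q y / p y := div_pos hq h0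
      have hlog : Real.log (q y / p y) ≤ q y / p y - 1 := Real.log_le_sub_one_of_pos hd
      have h1 : p y * Real.logb 2 (q y / p y) = p y * (Real.log (q y / p y) / Real.log 2) := by
        rw [Real.logb]
      rw [h1]
      have h2 : p y * (Real.log (q y / p y) / Real.log 2)
          ≤ p y * ((q y / p y - 1) / Real.log 2) := by
        apply mul_le_mul_of_nonneg_left _ (hp0 y)
        gcongr
      have h3 : p y * ((q y / p y - 1) / Real.log 2) = (q y - p y) / Real.log 2 := by
        field_simp
      linarith
  calc ∑ y, p y * Real.logb 2 (q y / p y) ≤ ∑ y, (q y - p y) / Real.log 2 :=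
        Finset.sum_le_sum fun y _ => key y
    _ = ((∑ y, q y) - 1) / Real.log 2 := by
        rw [← Finset.sum_div, Finset.sum_sub_distrib, hp1]
    _ ≤ 0 := div_nonpos_of_nonpos_of_nonneg (by linarith) hl2.le

/-! ### Dk : real-valued KL sum -/

def Dk {Y : Type*} [Fintype Y] (p q : Y → ℝ) : ℝ :=
  ∑ y, if p y = 0 then 0 else p y * Real.logb 2 (p y / q y)

lemma Dk_eq_sum (p q : Y → ℝ) : Dk p q = ∑ y, p y * Real.logb 2 (p y / q y) := by
  unfold Dk
  apply Finset.sum_congr rfl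
  intro y _
  split_ifs with h
  · rw [h, zero_mul]
  · rfl

lemma KLdiv_eq_Dk {p q : Y → ℝ} (h : ∀ y, q y = 0 → p y = 0) :
    KLdiv p q = ((Dk p q : ℝ) : EReal) := by
  rw [KLdiv, if_pos h]; rfl

lemma KLdiv_eq_Dk_of_pos {p q : Y → ℝ} (hq : ∀ y, 0 < q y) :
    KLdiv p q = ((Dk p q : ℝ) : EReal) :=
  KLdiv_eq_Dk fun y hy => absurd hy (ne_of_gt (hq y))

lemma Dk_nonneg {p q : Y → ℝ} (hp : p ∈ probSimplex Y) (hq0 : ∀ y, 0 ≤ q y)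
    (hq1 : ∑ y, q y ≤ 1) (h : ∀ y, q y = 0 → p y = 0) : 0 ≤ Dk p q := by
  have hps := hp.1
  have hp1 := hp.2
  have hneg : Dk p q = - ∑ y, p y * Real.logb 2 (q y / p y) := by
    rw [Dk_eq_sum, ← Finset.sum_neg_distrib]
    apply Finset.sum_congr rfl
    intro y _
    rcases eq_or_ne (p y) 0 with h0 | h0
    · rw [h0]; ring
    · have hqy : q y ≠ 0 := fun hh => h0 (h y hh)
      rw [Real.logb_div h0 hqy, Real.logb_div hqy h0]; ring
  rw [hneg]
  have := IC_gibbs hps hp1 hq0 hq1 (fun y hy => (hq0 y).lt_of_ne (fun e => hy (h y e.symm)))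
  linarith

lemma KLdiv_nonneg {p q : Y → ℝ} (hp : p ∈ probSimplex Y) (hq : q ∈ probSimplex Y) :
    (0 : EReal) ≤ KLdiv p q := by
  rw [KLdiv]
  split_ifs with h
  · have := Dk_nonneg hp hq.1 hq.2.le h
    exact_mod_cast this
  · exact le_top

lemma Dk_le_of_le {p q q' : Y → ℝ} (hp0 : ∀ y, 0 ≤ p y) (hp1 : ∑ y, p y = 1)
    (hq0 : ∀ y, 0 ≤ q y) {c : ℝ} (hc : 0 < c)
    (hcq : ∀ y, c * q y ≤ q' y) (hsupp : ∀ y, q y = 0 → p y = 0) :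
    Dk p q' ≤ Dk p q - Real.logb 2 c := by
  rw [Dk_eq_sum, Dk_eq_sum]
  have key : ∀ y, p y * Real.logb 2 (p y / q' y)
      ≤ p y * Real.logb 2 (p y / q y) - p y * Real.logb 2 c := by
    intro y
    rcases eq_or_lt_of_le (hp0 y) with h0 | h0
    · rw [← h0]; simp
    · have hqy : 0 < q y := (hq0 y).lt_of_ne fun e => (ne_of_gt h0) (hsupp y e.symm)
      have hq'y : 0 < q' y := lt_of_lt_of_le (by positivity) (hcq y)
      have h1 : p y / q' y ≤ p y / (c * q y) := by
        gcongr
        exact hcq y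
      have h2 : Real.logb 2 (p y / q' y) ≤ Real.logb 2 (p y / (c * q y)) :=
        Real.logb_le_logb_of_le one_lt_two (by positivity) h1
      have h3 : Real.logb 2 (p y / (c * q y)) = Real.logb 2 (p y / q y) - Real.logb 2 c := by
        rw [show p y / (c * q y) = p y / q y / c by rw [div_div, mul_comm],
          Real.logb_div (by positivity) hc.ne']
      have h4 := mul_le_mul_of_nonneg_left h2 h0.le
      rw [h3] at h4
      have h5 := mul_sub (p y) (Real.logb 2 (p y / q y)) (Real.logb 2 c)
      linarith
  calc (∑ y, p y * Real.logb 2 (p y / q' y))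
      ≤ ∑ y, (p y * Real.logb 2 (p y / q y) - p y * Real.logb 2 c) :=
        Finset.sum_le_sum fun y _ => key y
    _ = (∑ y, p y * Real.logb 2 (p y / q y)) - Real.logb 2 c := by
        rw [Finset.sum_sub_distrib, ← Finset.sum_mul, hp1, one_mul]

/-! ### log-sum inequality -/

lemma IC_logsum {a1 a2 b1 b2 : ℝ} (ha1 : 0 ≤ a1) (ha2 : 0 ≤ a2)
    (hb1 : 0 < b1) (hb2 : 0 < b2) :
    (a1 + a2) * Real.logb 2 ((a1 + a2) / (b1 + b2))
      ≤ a1 * Real.logb 2 (a1 / b1) + a2 * Real.logb 2 (a2 / b2) := by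
  have hl2 : (0:ℝ) < Real.log 2 := Real.log_pos one_lt_two
  have hb : 0 < b1 + b2 := by linarith
  have main : ∀ a b c d : ℝ, 0 < a → 0 < b → 0 < c → 0 < d →
      a * Real.logb 2 (c / d) - a * Real.logb 2 (a / b) ≤ (b * c / d - a) / Real.log 2 := by
    intro a b c d ha hbb hcc hdd
    have hx : 0 < b * c / (a * d) := by positivity
    have hlog : Real.log (b * c / (a * d)) ≤ b * c / (a * d) - 1 :=
      Real.log_le_sub_one_of_pos hx
    have heq : Real.logb 2 (c / d) - Real.logb 2 (a / b)
        = Real.log (b * c / (a * d)) / Real.log 2 := by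
      rw [show b * c / (a * d) = (c / d) / (a / b) by field_simp,
        Real.log_div (by positivity) (by positivity)]
      rw [Real.logb, Real.logb, div_sub_div_same]
    have h1 : a * (Real.logb 2 (c / d) - Real.logb 2 (a / b))
        ≤ a * ((b * c / (a * d) - 1) / Real.log 2) := by
      rw [heq]
      apply mul_le_mul_of_nonneg_left _ ha.le
      gcongr
    have h2 : a * ((b * c / (a * d) - 1) / Real.log 2) = (b * c / d - a) / Real.log 2 := by
      field_simp
    nlinarith [mul_sub a (Real.logb 2 (c / d)) (Real.logb 2 (a / b))]
  rcases eq_or_lt_of_le ha1 with h1 | h1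
  · rcases eq_or_lt_of_le ha2 with h2 | h2
    · rw [← h1, ← h2]; norm_num
    · rw [← h1]
      rw [zero_add, zero_mul, zero_add]
      apply mul_le_mul_of_nonneg_left _ h2.le
      apply Real.logb_le_logb_of_le one_lt_two (by positivity)
      gcongr <;> linarith
  · rcases eq_or_lt_of_le ha2 with h2 | h2
    · rw [← h2]
      rw [add_zero, zero_mul, add_zero]
      apply mul_le_mul_of_nonneg_left _ h1.le
      apply Real.logb_le_logb_of_le one_lt_two (by positivity)
      gcongr <;> linarith
    · have k1 := main a1 b1 (a1 + a2) (b1 + b2) h1 hb1 (by linarith) hb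
      have k2 := main a2 b2 (a1 + a2) (b1 + b2) h2 hb2 (by linarith) hb
      have hsum : (b1 * (a1 + a2) / (b1 + b2) - a1) + (b2 * (a1 + a2) / (b1 + b2) - a2) = 0 := by
        field_simp
        ring
      have e1 : (a1 + a2) * Real.logb 2 ((a1 + a2) / (b1 + b2))
          = a1 * Real.logb 2 ((a1 + a2) / (b1 + b2))
            + a2 * Real.logb 2 ((a1 + a2) / (b1 + b2)) := by ring
      have dz : (b1 * (a1 + a2) / (b1 + b2) - a1) / Real.log 2
          + (b2 * (a1 + a2) / (b1 + b2) - a2) / Real.log 2 = 0 := by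
        rw [← add_div, hsum, zero_div]
      linarith [k1, k2]

/-! ### the inner value g -/

def Pt {Y : Type*} [Fintype Y] (t : Y → ℝ) : Set (Y → ℝ) :=
  {p ∈ probSimplex Y | ∑ y, p y * t y ≤ 0}

def gE {Y : Type*} [Fintype Y] (t q : Y → ℝ) : EReal := ⨅ p ∈ Pt t, KLdiv p q

def gR {Y : Type*} [Fintype Y] (t q : Y → ℝ) : ℝ := (gE t q).toReal

lemma gE_nonneg {t q : Y → ℝ} (hq : q ∈ probSimplex Y) : (0:EReal) ≤ gE t q :=
  le_iInf₂ fun _p hp => KLdiv_nonneg hp.1 hq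

lemma gE_le_KLdiv {t q p : Y → ℝ} (hp : p ∈ Pt t) : gE t q ≤ KLdiv p q :=
  iInf₂_le p hp

lemma gE_coe {t q : Y → ℝ} (hne : (Pt t).Nonempty) (hq : q ∈ probSimplex Y)
    (hqpos : ∀ y, 0 < q y) : gE t q = ((gR t q : ℝ) : EReal) := by
  obtain ⟨p, hp⟩ := hne
  have htop : gE t q ≠ ⊤ := by
    have h1 : gE t q ≤ ((Dk p q : ℝ) : EReal) := by
      rw [← KLdiv_eq_Dk_of_pos hqpos]
      exact gE_le_KLdiv hp
    exact ne_top_of_le_ne_top (EReal.coe_ne_top _) h1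
  have hbot : gE t q ≠ ⊥ := by
    intro h
    have h0 := gE_nonneg (t := t) (q := q) hq
    rw [h] at h0
    simp at h0
  rw [gR, EReal.coe_toReal htop hbot]

lemma gR_nonneg {t q : Y → ℝ} (hq : q ∈ probSimplex Y) : 0 ≤ gR t q := by
  rcases eq_or_ne (gE t q) ⊤ with h | h
  · simp [gR, h]
  · have h0 := gE_nonneg (t := t) (q := q) hq
    have hbot : gE t q ≠ ⊥ := by
      intro hb
      rw [hb] at h0
      simp at h0
    have := EReal.toReal_le_toReal h0 (by simp) h
    simpa [gR] using this

lemma gR_le_Dk {t q p : Y → ℝ} (hp : p ∈ Pt t) (hq : q ∈ probSimplex Y)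
    (hqpos : ∀ y, 0 < q y) : gR t q ≤ Dk p q := by
  have h := gE_le_KLdiv (q := q) hp
  rw [gE_coe ⟨p, hp⟩ hq hqpos, KLdiv_eq_Dk_of_pos hqpos] at h
  exact_mod_cast h

lemma gR_exists {t q : Y → ℝ} (hne : (Pt t).Nonempty) (hq : q ∈ probSimplex Y)
    (hqpos : ∀ y, 0 < q y) {δ : ℝ} (hδ : 0 < δ) :
    ∃ p ∈ Pt t, Dk p q ≤ gR t q + δ := by
  have h : gE t q < (((gR t q + δ : ℝ)) : EReal) := by
    rw [gE_coe hne hq hqpos]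
    exact_mod_cast (lt_add_of_pos_right _ hδ)
  rw [gE] at h
  simp only [iInf_lt_iff] at h
  obtain ⟨p, hp, hlt⟩ := h
  refine ⟨p, hp, ?_⟩
  rw [KLdiv_eq_Dk_of_pos hqpos] at hlt
  exact_mod_cast hlt.le

lemma gR_mod {t q q' : Y → ℝ} (hne : (Pt t).Nonempty)
    (hq : q ∈ probSimplex Y) (hqpos : ∀ y, 0 < q y)
    (hq' : q' ∈ probSimplex Y) (hq'pos : ∀ y, 0 < q' y)
    {c : ℝ} (hc : 0 < c) (hcq : ∀ y, c * q y ≤ q' y) :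
    gR t q' ≤ gR t q - Real.logb 2 c := by
  apply le_of_forall_pos_le_add
  intro δ hδ
  obtain ⟨p, hp, hDk⟩ := gR_exists hne hq hqpos hδ
  have h1 : gR t q' ≤ Dk p q' := gR_le_Dk hp hq' hq'pos
  have h2 : Dk p q' ≤ Dk p q - Real.logb 2 c :=
    Dk_le_of_le hp.1.1 hp.1.2 (fun y => (hqpos y).le) hc hcq
      (fun y hy => absurd hy (ne_of_gt (hqpos y)))
  linarith

lemma gR_convex {t q1 q2 : Y → ℝ} (hne : (Pt t).Nonempty)
    (hq1 : q1 ∈ probSimplex Y) (hq1p : ∀ y, 0 < q1 y)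
    (hq2 : q2 ∈ probSimplex Y) (hq2p : ∀ y, 0 < q2 y)
    {θ : ℝ} (hθ0' : 0 ≤ θ) (hθ1'' : θ ≤ 1) :
    gR t (fun y => θ * q1 y + (1 - θ) * q2 y)
      ≤ θ * gR t q1 + (1 - θ) * gR t q2 := by
  rcases eq_or_lt_of_le hθ0' with h0 | hθ0
  · have he : (fun y => θ * q1 y + (1 - θ) * q2 y) = q2 := by
      funext y
      rw [← h0]
      ring
    rw [he, ← h0]
    norm_num
  rcases eq_or_lt_of_le hθ1'' with h1 | hθ1
  · have he : (fun y => θ * q1 y + (1 - θ) * q2 y) = q1 := by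
      funext y
      rw [h1]
      ring
    rw [he, h1]
    norm_num
  have hθ1' : (0:ℝ) < 1 - θ := by linarith
  set qb : Y → ℝ := fun y => θ * q1 y + (1 - θ) * q2 y with hqb
  have hqbΔ : qb ∈ probSimplex Y := by
    constructor
    · intro y
      have a1 := hq1.1 y
      have a2 := hq2.1 y
      simp only [hqb]
      nlinarith
    · simp only [hqb]
      rw [Finset.sum_add_distrib, ← Finset.mul_sum, ← Finset.mul_sum, hq1.2, hq2.2]
      ring
  have hqbp : ∀ y, 0 < qb y := by
    intro y
    have a1 := hq1p y
    have a2 := hq2p y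
    simp only [hqb]
    nlinarith
  apply le_of_forall_pos_le_add
  intro δ hδ
  obtain ⟨p1, hp1, hD1⟩ := gR_exists hne hq1 hq1p hδ
  obtain ⟨p2, hp2, hD2⟩ := gR_exists hne hq2 hq2p hδ
  set p : Y → ℝ := fun y => θ * p1 y + (1 - θ) * p2 y with hpdef
  have hpPt : p ∈ Pt t := by
    refine ⟨⟨fun y => ?_, ?_⟩, ?_⟩
    · simp only [hpdef]
      nlinarith [hp1.1.1 y, hp2.1.1 y]
    · simp only [hpdef]
      rw [Finset.sum_add_distrib, ← Finset.mul_sum, ← Finset.mul_sum, hp1.1.2, hp2.1.2]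
      ring
    · simp only [hpdef]
      have e : ∑ y, (θ * p1 y + (1 - θ) * p2 y) * t y
          = θ * (∑ y, p1 y * t y) + (1 - θ) * (∑ y, p2 y * t y) := by
        rw [Finset.mul_sum, Finset.mul_sum, ← Finset.sum_add_distrib]
        apply Finset.sum_congr rfl
        intro y _
        ring
      rw [e]
      nlinarith [hp1.2, hp2.2]
  have hmain : gR t qb ≤ Dk p qb := gR_le_Dk hpPt hqbΔ hqbp
  have hconv : Dk p qb ≤ θ * Dk p1 q1 + (1 - θ) * Dk p2 q2 := by
    rw [Dk_eq_sum, Dk_eq_sum, Dk_eq_sum, Finset.mul_sum, Finset.mul_sum,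
      ← Finset.sum_add_distrib]
    apply Finset.sum_le_sum
    intro y _
    have key := IC_logsum (mul_nonneg hθ0.le (hp1.1.1 y)) (mul_nonneg hθ1'.le (hp2.1.1 y))
      (mul_pos hθ0 (hq1p y)) (mul_pos hθ1' (hq2p y))
    rw [show θ * p1 y / (θ * q1 y) = p1 y / q1 y by
        rw [mul_div_mul_left _ _ hθ0.ne'],
      show (1 - θ) * p2 y / ((1 - θ) * q2 y) = p2 y / q2 y by
        rw [mul_div_mul_left _ _ hθ1'.ne']] at key
    calc p y * Real.logb 2 (p y / qb y)
        = (θ * p1 y + (1 - θ) * p2 y)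
            * Real.logb 2 ((θ * p1 y + (1 - θ) * p2 y) / (θ * q1 y + (1 - θ) * q2 y)) := by
          simp only [hpdef, hqb]
      _ ≤ θ * p1 y * Real.logb 2 (p1 y / q1 y)
            + (1 - θ) * p2 y * Real.logb 2 (p2 y / q2 y) := key
      _ = θ * (p1 y * Real.logb 2 (p1 y / q1 y))
            + (1 - θ) * (p2 y * Real.logb 2 (p2 y / q2 y)) := by ring
  have m1 := mul_le_mul_of_nonneg_left hD1 hθ0.le
  have m2 := mul_le_mul_of_nonneg_left hD2 hθ1'.le
  nlinarith

/-! ### the compact truncated simplex -/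

def Kset (Y : Type*) [Fintype Y] (ε : ℝ) : Set (Y → ℝ) :=
  {q ∈ probSimplex Y | ∀ y, ε ≤ q y}

lemma Kset_compact (ε : ℝ) : IsCompact (Kset Y ε) := by
  have hsub : Kset Y ε ⊆ Set.pi Set.univ (fun _ : Y => Set.Icc (0:ℝ) 1) := by
    intro q hq y _
    refine ⟨hq.1.1 y, ?_⟩
    have h := Finset.single_le_sum (f := q) (fun i _ => hq.1.1 i) (Finset.mem_univ y)
    rw [hq.1.2] at h
    exact h
  have hclosed : IsClosed (Kset Y ε) := by
    have h1 : IsClosed {q : Y → ℝ | ∑ y, q y = 1} :=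
      isClosed_eq (by continuity) continuous_const
    have h2 : IsClosed {q : Y → ℝ | ∀ y, 0 ≤ q y} := by
      rw [Set.setOf_forall]
      exact isClosed_iInter fun y => isClosed_le continuous_const (continuous_apply y)
    have h3 : IsClosed {q : Y → ℝ | ∀ y, ε ≤ q y} := by
      rw [Set.setOf_forall]
      exact isClosed_iInter fun y => isClosed_le continuous_const (continuous_apply y)
    have hEq : Kset Y ε
        = ({q : Y → ℝ | ∀ y, 0 ≤ q y} ∩ {q : Y → ℝ | ∑ y, q y = 1}) ∩ {q : Y → ℝ | ∀ y, ε ≤ q y} := by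
      ext q
      constructor
      · rintro ⟨⟨a, b⟩, c⟩
        exact ⟨⟨a, b⟩, c⟩
      · rintro ⟨⟨a, b⟩, c⟩
        exact ⟨⟨a, b⟩, c⟩
    rw [hEq]
    exact (h2.inter h1).inter h3
  exact (isCompact_univ_pi fun _ => isCompact_Icc).of_isClosed_subset hclosed hsub

lemma Kset_convex (ε : ℝ) : Convex ℝ (Kset Y ε) := by
  intro q1 hq1 q2 hq2 a b ha hb hab
  refine ⟨⟨fun y => ?_, ?_⟩, fun y => ?_⟩
  · simp only [Pi.add_apply, Pi.smul_apply, smul_eq_mul]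
    nlinarith [hq1.1.1 y, hq2.1.1 y]
  · simp only [Pi.add_apply, Pi.smul_apply, smul_eq_mul]
    rw [Finset.sum_add_distrib, ← Finset.mul_sum, ← Finset.mul_sum, hq1.1.2, hq2.1.2]
    linarith
  · simp only [Pi.add_apply, Pi.smul_apply, smul_eq_mul]
    have e1 := mul_le_mul_of_nonneg_left (hq1.2 y) ha
    have e2 := mul_le_mul_of_nonneg_left (hq2.2 y) hb
    have e3 : a * ε + b * ε = ε := by rw [← add_mul, hab, one_mul]
    linarith

lemma Kset_subset_pos {ε : ℝ} (hε : 0 < ε) {q : Y → ℝ} (hq : q ∈ Kset Y ε) :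
    ∀ y, 0 < q y := fun y => lt_of_lt_of_le hε (hq.2 y)

lemma gR_cont {t : Y → ℝ} (hne : (Pt t).Nonempty) {ε : ℝ} (hε : 0 < ε)
    {e : ℝ} (he : 0 < e) :
    ∃ d : ℝ, 0 < d ∧ ∀ q ∈ Kset Y ε, ∀ q' ∈ Kset Y ε, dist q q' ≤ d →
      gR t q' ≤ gR t q + e := by
  set ρ : ℝ := (2:ℝ) ^ (-e) with hρ
  have hρ0 : 0 < ρ := Real.rpow_pos_of_pos (by norm_num) _
  have hρ1 : ρ < 1 := Real.rpow_lt_one_of_one_lt_of_neg (by norm_num) (by linarith)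
  refine ⟨ε * (1 - ρ), by nlinarith, ?_⟩
  intro q hq q' hq' hdist
  have hlog : Real.logb 2 ρ = -e := by
    rw [hρ]
    exact Real.logb_rpow (by norm_num) (by norm_num)
  have hcq : ∀ y, ρ * q y ≤ q' y := by
    intro y
    have h1 : dist (q y) (q' y) ≤ dist q q' := dist_le_pi_dist q q' y
    have h2 : |q y - q' y| ≤ ε * (1 - ρ) := by
      rw [← Real.dist_eq]
      exact le_trans h1 hdist
    have h3 : q y - q' y ≤ ε * (1 - ρ) := (abs_le.1 h2).2
    nlinarith [hq.2 y]
  have hm := gR_mod hne hq.1 (Kset_subset_pos hε hq) hq'.1 (Kset_subset_pos hε hq') hρ0 hcq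
  rw [hlog] at hm
  linarith

lemma exists_cover {ε : ℝ} (hε : 0 < ε) {T : Set (Y → ℝ)} {c : ℝ}
    (hfeas : ∀ t ∈ T, (Pt t).Nonempty)
    (hcov : ∀ q ∈ Kset Y ε, ∃ t ∈ T, c < gR t q) (hKne : (Kset Y ε).Nonempty) :
    ∃ F : Finset (Y → ℝ), ↑F ⊆ T ∧ F.Nonempty ∧
      ∀ q ∈ Kset Y ε, ∃ t ∈ F, c < gR t q := by
  classical
  have hsel : ∀ i : (Kset Y ε), ∃ t ∈ T, c < gR t (i : Y → ℝ) := fun i => hcov i i.2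
  choose tf htfT htfc using hsel
  have hrad : ∀ i : (Kset Y ε), ∃ d : ℝ, 0 < d ∧ ∀ q ∈ Kset Y ε, ∀ q' ∈ Kset Y ε,
      dist q q' ≤ d → gR (tf i) q' ≤ gR (tf i) q + (gR (tf i) (i : Y → ℝ) - c) / 2 := by
    intro i
    exact gR_cont (hfeas _ (htfT i)) hε (by linarith [htfc i])
  choose rad hrad0 hradP using hrad
  have hcover : Kset Y ε ⊆ ⋃ i : (Kset Y ε), Metric.ball (i : Y → ℝ) (rad i) := by
    intro q hq
    exact Set.mem_iUnion.2 ⟨⟨q, hq⟩, Metric.mem_ball_self (hrad0 _)⟩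
  obtain ⟨s, hs⟩ := (Kset_compact (Y := Y) ε).elim_finite_subcover
    (fun i : (Kset Y ε) => Metric.ball (i : Y → ℝ) (rad i)) (fun _ => Metric.isOpen_ball) hcover
  refine ⟨s.image tf, ?_, ?_, ?_⟩
  · intro x hx
    simp only [Finset.coe_image, Set.mem_image, Finset.mem_coe] at hx
    obtain ⟨i, _, rfl⟩ := hx
    exact htfT i
  · obtain ⟨q0, hq0⟩ := hKne
    have hmem := hs hq0
    rw [Set.mem_iUnion₂] at hmem
    obtain ⟨i, his, _⟩ := hmem
    exact ⟨tf i, Finset.mem_image_of_mem tf his⟩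
  · intro q hq
    have hmem := hs hq
    rw [Set.mem_iUnion₂] at hmem
    obtain ⟨i, his, hball⟩ := hmem
    refine ⟨tf i, Finset.mem_image_of_mem tf his, ?_⟩
    have hd : dist (q : Y → ℝ) (i : Y → ℝ) ≤ rad i := by
      rw [Metric.mem_ball] at hball
      exact hball.le
    have hP := hradP i q hq (i : Y → ℝ) i.2 hd
    have hc := htfc i
    linarith

/-! ### finite minimax via separation -/

lemma IC_minimax {ε : ℝ} (hε : 0 < ε) (hKne : (Kset Y ε).Nonempty)
    {F : Finset (Y → ℝ)} (hFfeas : ∀ t ∈ F, (Pt t).Nonempty) {c : ℝ}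
    (hc : ∀ q ∈ Kset Y ε, ∃ t ∈ F, c < gR t q) :
    ∃ w : (Y → ℝ) → ℝ, (∀ t, 0 ≤ w t) ∧ (∀ t, w t ≠ 0 → t ∈ F) ∧
      (∑ t ∈ F, w t = 1) ∧ ∀ q ∈ Kset Y ε, c ≤ ∑ t ∈ F, w t * gR t q := by
  classical
  set S : Set ({x // x ∈ F} → ℝ) :=
    {v | ∃ q ∈ Kset Y ε, ∀ t : {x // x ∈ F}, gR (t : Y → ℝ) q ≤ v t} with hSdef
  have hSconv : Convex ℝ S := by
    rintro v1 ⟨x1, hx1K, hx1⟩ v2 ⟨x2, hx2K, hx2⟩ a b ha hb hab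
    have hb_eq : b = 1 - a := by linarith
    subst hb_eq
    refine ⟨a • x1 + (1 - a) • x2, Kset_convex ε hx1K hx2K ha hb (by ring), fun t => ?_⟩
    have hcomb : (a • x1 + (1 - a) • x2) = fun y => a * x1 y + (1 - a) * x2 y := by
      funext y
      simp [Pi.add_apply, Pi.smul_apply, smul_eq_mul]
    simp only [Pi.add_apply, Pi.smul_apply, smul_eq_mul]
    rw [hcomb]
    refine le_trans (gR_convex (hFfeas _ t.2) hx1K.1 (Kset_subset_pos hε hx1K) hx2K.1
      (Kset_subset_pos hε hx2K) ha (by linarith)) ?_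
    have m1 := mul_le_mul_of_nonneg_left (hx1 t) ha
    have m2 := mul_le_mul_of_nonneg_left (hx2 t) (by linarith : (0:ℝ) ≤ 1 - a)
    linarith
  have hSclosed : IsClosed S := by
    apply IsSeqClosed.isClosed
    intro v p hvS hvp
    choose qn hqnK hqn using hvS
    obtain ⟨q, hqK, φ, hφ, hq⟩ := (Kset_compact (Y := Y) ε).tendsto_subseq hqnK
    refine ⟨q, hqK, fun t => ?_⟩
    apply le_of_forall_pos_le_add
    intro e he
    obtain ⟨d, hd, hmod⟩ := gR_cont (hFfeas _ t.2) hε (half_pos he)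
    obtain ⟨N1, hN1⟩ := Metric.tendsto_atTop.1 hq d hd
    have h2 : Filter.Tendsto (fun n => v (φ n) t) Filter.atTop (𝓝 (p t)) :=
      ((tendsto_pi_nhds.1 hvp) t).comp hφ.tendsto_atTop
    obtain ⟨N2, hN2⟩ := Metric.tendsto_atTop.1 h2 (e/2) (half_pos he)
    set n := max N1 N2 with hn
    have ha1 := hN1 n (le_max_left _ _)
    have hb1 := hN2 n (le_max_right _ _)
    have hb' : v (φ n) t ≤ p t + e/2 := by
      rw [Real.dist_eq] at hb1
      linarith [(abs_lt.1 hb1).2]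
    have hdist : dist (qn (φ n)) q ≤ d := by
      have : dist ((qn ∘ φ) n) q < d := ha1
      simpa using this.le
    have hmod' := hmod (qn (φ n)) (hqnK (φ n)) q hqK hdist
    have hv := hqn (φ n) t
    linarith
  set x0 : {x // x ∈ F} → ℝ := fun _ => c with hx0
  have hx0S : x0 ∉ S := by
    rintro ⟨q, hqK, hle⟩
    obtain ⟨t, htF, htc⟩ := hc q hqK
    exact absurd (hle ⟨t, htF⟩) (not_le.mpr htc)
  obtain ⟨f, u, hfu, hfS⟩ := geometric_hahn_banach_point_closed hSconv hSclosed hx0S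
  set lam : {x // x ∈ F} → ℝ := fun t => f (Pi.single t (1:ℝ)) with hlam
  have hsingle : ∀ i : {x // x ∈ F}, (fun j => if i = j then (1:ℝ) else 0) = Pi.single i 1 := by
    intro i
    funext j
    rw [Pi.single_apply]
    simp [eq_comm]
  have hrepr : ∀ v : {x // x ∈ F} → ℝ, f v = ∑ t, v t * lam t := by
    intro v
    have hv : v = ∑ t : {x // x ∈ F}, v t • (Pi.single t (1:ℝ) : {x // x ∈ F} → ℝ) := by
      conv_lhs => rw [pi_eq_sum_univ v]
      exact Finset.sum_congr rfl fun t _ => by rw [hsingle t]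
    calc f v = f (∑ t : {x // x ∈ F}, v t • (Pi.single t (1:ℝ) : {x // x ∈ F} → ℝ)) := by
          rw [← hv]
      _ = ∑ t, v t * lam t := by
          rw [map_sum]
          exact Finset.sum_congr rfl fun t _ => by rw [map_smul, smul_eq_mul]
  obtain ⟨q0, hq0K⟩ := hKne
  set v0 : {x // x ∈ F} → ℝ := fun t => gR (t : Y → ℝ) q0 with hv0
  have hv0S : v0 ∈ S := ⟨q0, hq0K, fun t => le_refl _⟩
  have hlam0 : ∀ t, 0 ≤ lam t := by
    intro t
    by_contra hneg
    push_neg at hneg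
    set sc : ℝ := (f v0 - u + 1) / (-lam t) with hsc
    have hscpos : 0 < sc := by
      apply div_pos
      · linarith [hfS v0 hv0S]
      · linarith
    have hmem : v0 + sc • (Pi.single t (1:ℝ) : {x // x ∈ F} → ℝ) ∈ S := by
      refine ⟨q0, hq0K, fun t' => ?_⟩
      have hnn : (0:ℝ) ≤ (Pi.single t (1:ℝ) : {x // x ∈ F} → ℝ) t' := by
        rw [Pi.single_apply]
        split <;> norm_num
      simp only [Pi.add_apply, Pi.smul_apply, smul_eq_mul]
      have hv0t : v0 t' = gR ((t' : Y → ℝ)) q0 := rfl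
      nlinarith [mul_nonneg hscpos.le hnn]
    have hval := hfS _ hmem
    rw [map_add, map_smul, smul_eq_mul] at hval
    have hcalc : sc * lam t = -(f v0 - u + 1) := by
      have hl : (-lam t) ≠ 0 := neg_ne_zero.mpr (ne_of_lt hneg)
      rw [hsc, div_mul_eq_mul_div, div_eq_iff hl]
      ring
    rw [hcalc] at hval
    linarith
  set L : ℝ := ∑ t, lam t with hL
  have hsumpos : 0 < L := by
    rcases eq_or_lt_of_le (Finset.sum_nonneg fun t _ => hlam0 t) with h0 | h0
    · exfalso
      have hall : ∀ t ∈ Finset.univ, lam t = 0 :=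
        (Finset.sum_eq_zero_iff_of_nonneg fun t _ => hlam0 t).1 h0.symm
      have hfv0 : f v0 = 0 := by
        rw [hrepr]
        exact Finset.sum_eq_zero fun t ht => by rw [hall t (Finset.mem_univ t), mul_zero]
      have hfx0 : f x0 = 0 := by
        rw [hrepr]
        exact Finset.sum_eq_zero fun t ht => by rw [hall t (Finset.mem_univ t), mul_zero]
      have h1 := hfS v0 hv0S
      rw [hfv0] at h1
      rw [hfx0] at hfu
      linarith
    · exact h0
  refine ⟨fun x => if hx : x ∈ F then lam ⟨x, hx⟩ / L else 0, ?_, ?_, ?_, ?_⟩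
  · intro t
    dsimp only
    by_cases hx : t ∈ F
    · rw [dif_pos hx]
      exact div_nonneg (hlam0 _) hsumpos.le
    · rw [dif_neg hx]
  · intro t ht
    by_contra h
    dsimp only at ht
    rw [dif_neg h] at ht
    exact ht rfl
  · dsimp only
    rw [← Finset.sum_attach F (fun x => if hx : x ∈ F then lam ⟨x, hx⟩ / L else 0)]
    have heq : ∀ t : {x // x ∈ F},
        (if hx : (t : Y → ℝ) ∈ F then lam ⟨(t : Y → ℝ), hx⟩ / L else 0) = lam t / L := by
      intro t
      rw [dif_pos t.2]
    rw [Finset.sum_congr rfl fun t _ => heq t, ← Finset.univ_eq_attach, ← Finset.sum_div,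
      ← hL, div_self hsumpos.ne']
  · intro q hqK
    dsimp only
    have hbound : u < ∑ t : {x // x ∈ F}, gR (t : Y → ℝ) q * lam t := by
      have hmem : (fun t : {x // x ∈ F} => gR (t : Y → ℝ) q) ∈ S := ⟨q, hqK, fun t => le_refl _⟩
      have h1 := hfS _ hmem
      rwa [hrepr] at h1
    have hx0val : f x0 = c * L := by
      rw [hrepr, hL, Finset.mul_sum]
    have hcL : c * L < u := by
      rw [← hx0val]
      exact hfu
    have hrw : ∑ x ∈ F, (if hx : x ∈ F then lam ⟨x, hx⟩ / L else 0) * gR x q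
        = (∑ t : {x // x ∈ F}, gR (t : Y → ℝ) q * lam t) / L := by
      rw [← Finset.sum_attach F
        (fun x => (if hx : x ∈ F then lam ⟨x, hx⟩ / L else 0) * gR x q), Finset.sum_div,
        Finset.univ_eq_attach]
      apply Finset.sum_congr rfl
      intro t _
      rw [dif_pos t.2]
      ring
    rw [hrw, le_div_iff₀ hsumpos]
    linarith

/-! ### simple pmfs -/

open scoped Classical in
lemma dpmf_mem {t : Y → ℝ} {y0 : Y} (h : t y0 ≤ 0) :
    (fun y => if y = y0 then (1:ℝ) else 0) ∈ Pt t := by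
  classical
  refine ⟨⟨fun y => ?_, ?_⟩, ?_⟩
  · dsimp only
    split <;> norm_num
  · show (∑ y, if y = y0 then (1:ℝ) else 0) = 1
    rw [Finset.sum_ite_eq' Finset.univ y0 (fun _ => (1:ℝ)), if_pos (Finset.mem_univ y0)]
  · show (∑ y, (if y = y0 then (1:ℝ) else 0) * t y) ≤ 0
    have e : ∀ y, (if y = y0 then (1:ℝ) else 0) * t y = if y = y0 then t y else 0 := by
      intro y
      split <;> simp
    rw [Finset.sum_congr rfl fun y _ => e y, Finset.sum_ite_eq' Finset.univ y0 t,
      if_pos (Finset.mem_univ y0)]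
    exact h

lemma Pt_nonempty {t : Y → ℝ} (h : ∃ y, t y ≤ 0) : (Pt t).Nonempty := by
  classical
  obtain ⟨y0, hy⟩ := h
  exact ⟨_, dpmf_mem hy⟩

lemma unif_mem [Nonempty Y] : (fun _ : Y => ((Fintype.card Y : ℝ))⁻¹) ∈ probSimplex Y := by
  have hcard : (0:ℝ) < (Fintype.card Y : ℝ) := by
    exact_mod_cast Fintype.card_pos
  constructor
  · intro y
    positivity
  · rw [Finset.sum_const, Finset.card_univ, nsmul_eq_mul, mul_inv_cancel₀ hcard.ne']

lemma sm_mem [Nonempty Y] {q : Y → ℝ} (hq : q ∈ probSimplex Y) {η : ℝ}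
    (hη0 : 0 ≤ η) (hη1 : η ≤ 1) :
    (fun y => (1 - η) * q y + η * ((Fintype.card Y : ℝ))⁻¹) ∈ probSimplex Y := by
  have hcard : (0:ℝ) < (Fintype.card Y : ℝ) := by
    exact_mod_cast Fintype.card_pos
  constructor
  · intro y
    have h1 := hq.1 y
    have h2 : (0:ℝ) ≤ ((Fintype.card Y : ℝ))⁻¹ := by positivity
    nlinarith
  · rw [Finset.sum_add_distrib, ← Finset.mul_sum, hq.2, Finset.sum_const, Finset.card_univ,
      nsmul_eq_mul]
    field_simp
    ring

lemma sm_lb [Nonempty Y] {q : Y → ℝ} {η : ℝ} (hη0 : 0 ≤ η) :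
    ∀ y, (1 - η) * q y ≤ (1 - η) * q y + η * ((Fintype.card Y : ℝ))⁻¹ := by
  intro y
  have hcard : (0:ℝ) < (Fintype.card Y : ℝ) := by
    exact_mod_cast Fintype.card_pos
  have : (0:ℝ) ≤ η * ((Fintype.card Y : ℝ))⁻¹ := by positivity
  linarith

lemma sm_eps [Nonempty Y] {q : Y → ℝ} (hq0 : ∀ y, 0 ≤ q y) {η : ℝ} (hη1 : η ≤ 1) :
    ∀ y, η * ((Fintype.card Y : ℝ))⁻¹ ≤ (1 - η) * q y + η * ((Fintype.card Y : ℝ))⁻¹ := by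
  intro y
  nlinarith [hq0 y]

/-! ### mutual information rewriting -/

lemma marg_helper {pT : (Y → ℝ) → ℝ} {k : (Y → ℝ) → Y → ℝ} {s : Finset (Y → ℝ)}
    (hsupp : Function.support pT ⊆ ↑s) :
    ∀ y, (∑ᶠ t, pT t * k t y) = ∑ t ∈ s, pT t * k t y := by
  intro y
  apply finsum_eq_sum_of_support_subset
  intro t ht
  rw [Function.mem_support] at ht
  exact hsupp (Function.mem_support.2 (left_ne_zero_of_mul ht))

lemma mi_eq_sum {pT : (Y → ℝ) → ℝ} {k : (Y → ℝ) → Y → ℝ} {s : Finset (Y → ℝ)}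
    (hsupp : Function.support pT ⊆ ↑s) :
    mutualInfoTY pT k = ∑ t ∈ s, ∑ y,
      (if k t y = 0 then 0 else
        pT t * k t y * Real.logb 2 (k t y / (∑ᶠ s', pT s' * k s' y))) := by
  apply finsum_eq_sum_of_support_subset
  intro t ht
  rw [Function.mem_support] at ht
  apply hsupp
  rw [Function.mem_support]
  intro hpt
  apply ht
  apply Finset.sum_eq_zero
  intro y _
  split
  · rfl
  · rw [hpt, zero_mul, zero_mul]

lemma marg_mem {w : (Y → ℝ) → ℝ} {k : (Y → ℝ) → Y → ℝ} {F : Finset (Y → ℝ)}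
    (hw0 : ∀ t, 0 ≤ w t) (hwsupp : Function.support w ⊆ ↑F) (hwsum : ∑ t ∈ F, w t = 1)
    (hkF : ∀ t ∈ F, k t ∈ probSimplex Y) :
    (fun y => ∑ᶠ s', w s' * k s' y) ∈ probSimplex Y := by
  have heq := marg_helper (k := k) hwsupp
  constructor
  · intro y
    show (0:ℝ) ≤ ∑ᶠ s', w s' * k s' y
    rw [heq y]
    exact Finset.sum_nonneg fun t ht => mul_nonneg (hw0 t) ((hkF t ht).1 y)
  · show (∑ y, ∑ᶠ s', w s' * k s' y) = 1
    rw [Finset.sum_congr rfl fun y _ => heq y]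
    calc ∑ y, ∑ t ∈ F, w t * k t y = ∑ t ∈ F, ∑ y, w t * k t y := Finset.sum_comm
      _ = ∑ t ∈ F, w t * ∑ y, k t y := by
          exact Finset.sum_congr rfl fun t _ => (Finset.mul_sum _ _ _).symm
      _ = ∑ t ∈ F, w t := by
          exact Finset.sum_congr rfl fun t ht => by rw [(hkF t ht).2, mul_one]
      _ = 1 := hwsum

lemma mi_le {A : Set (Y → ℝ)} {pT : (Y → ℝ) → ℝ} {k : (Y → ℝ) → Y → ℝ}
    (hpT : pT ∈ finPMFOn A) (hk : ∀ t ∈ A, k t ∈ probSimplex Y)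
    {q' : Y → ℝ} (hq' : q' ∈ probSimplex Y) (hq'pos : ∀ y, 0 < q' y)
    {C : ℝ} (hkC : ∀ t ∈ A, Dk (k t) q' ≤ C) :
    mutualInfoTY pT k ≤ C := by
  classical
  obtain ⟨hpT0, hpTfin, hpTsub, hpTsum⟩ := hpT
  set s : Finset (Y → ℝ) := hpTfin.toFinset with hs
  have hsupp : Function.support pT ⊆ ↑s := by
    rw [hs, Set.Finite.coe_toFinset]
  have hsA : ∀ t ∈ s, t ∈ A := fun t ht =>
    hpTsub (by rwa [hs, Set.Finite.mem_toFinset] at ht)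
  have hsum1 : ∑ t ∈ s, pT t = 1 := by
    rw [← hpTsum]
    exact (finsum_eq_sum_of_support_subset pT hsupp).symm
  set pY : Y → ℝ := fun y => ∑ t ∈ s, pT t * k t y with hpY
  have hpYeq : ∀ y, (∑ᶠ s', pT s' * k s' y) = pY y := marg_helper hsupp
  have hpY0 : ∀ y, 0 ≤ pY y := fun y =>
    Finset.sum_nonneg fun t ht => mul_nonneg (hpT0 t) ((hk t (hsA t ht)).1 y)
  have hpYsum : ∑ y, pY y = 1 := by
    calc ∑ y, pY y = ∑ t ∈ s, ∑ y, pT t * k t y := Finset.sum_comm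
      _ = ∑ t ∈ s, pT t * ∑ y, k t y := by
          exact Finset.sum_congr rfl fun t _ => (Finset.mul_sum _ _ _).symm
      _ = ∑ t ∈ s, pT t := by
          exact Finset.sum_congr rfl fun t ht => by rw [(hk t (hsA t ht)).2, mul_one]
      _ = 1 := hsum1
  rw [mi_eq_sum hsupp]
  have hterm : ∀ t ∈ s, (∑ y,
      (if k t y = 0 then 0 else
        pT t * k t y * Real.logb 2 (k t y / (∑ᶠ s', pT s' * k s' y))))
      = pT t * Dk (k t) q' + ∑ y, pT t * k t y * Real.logb 2 (q' y / pY y) := by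
    intro t ht
    have hkt := hk t (hsA t ht)
    have hpt : 0 < pT t := by
      have hne : pT t ≠ 0 := by
        rw [← Function.mem_support]
        rw [hs, Set.Finite.mem_toFinset] at ht
        exact ht
      exact (hpT0 t).lt_of_ne (Ne.symm hne)
    have hDk : Dk (k t) q' = ∑ y, if k t y = 0 then 0
        else k t y * Real.logb 2 (k t y / q' y) := rfl
    rw [hDk, Finset.mul_sum, ← Finset.sum_add_distrib]
    apply Finset.sum_congr rfl
    intro y _
    rw [hpYeq y]
    rcases eq_or_ne (k t y) 0 with h0 | h0
    · rw [if_pos h0, if_pos h0, h0]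
      ring
    · rw [if_neg h0, if_neg h0]
      have hky : 0 < k t y := (hkt.1 y).lt_of_ne (Ne.symm h0)
      have hpYy : 0 < pY y := by
        have hle : pT t * k t y ≤ pY y :=
          Finset.single_le_sum (f := fun t' => pT t' * k t' y)
            (fun t' ht' => mul_nonneg (hpT0 t') ((hk t' (hsA t' ht')).1 y)) ht
        nlinarith
      have hsplit : Real.logb 2 (k t y / pY y)
          = Real.logb 2 (k t y / q' y) + Real.logb 2 (q' y / pY y) := by
        rw [← Real.logb_mul (div_pos hky (hq'pos y)).ne' (div_pos (hq'pos y) hpYy).ne']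
        congr 1
        rw [div_mul_div_comm, mul_comm (k t y) (q' y), mul_div_mul_left _ _ (hq'pos y).ne']
      rw [hsplit]
      ring
  rw [Finset.sum_congr rfl hterm, Finset.sum_add_distrib]
  have hpart2 : ∑ t ∈ s, ∑ y, pT t * k t y * Real.logb 2 (q' y / pY y) ≤ 0 := by
    rw [Finset.sum_comm]
    have hrw : ∀ y, ∑ t ∈ s, pT t * k t y * Real.logb 2 (q' y / pY y)
        = pY y * Real.logb 2 (q' y / pY y) := by
      intro y
      rw [hpY]
      exact (Finset.sum_mul _ _ _).symm
    rw [Finset.sum_congr rfl fun y _ => hrw y]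
    exact IC_gibbs hpY0 hpYsum hq'.1 hq'.2.le (fun y _ => hq'pos y)
  have hpart1 : ∑ t ∈ s, pT t * Dk (k t) q' ≤ C := by
    calc ∑ t ∈ s, pT t * Dk (k t) q' ≤ ∑ t ∈ s, pT t * C :=
        Finset.sum_le_sum fun t ht => mul_le_mul_of_nonneg_left (hkC t (hsA t ht)) (hpT0 t)
      _ = C := by rw [← Finset.sum_mul, hsum1, one_mul]
  linarith

lemma mi_ge {w : (Y → ℝ) → ℝ} {k : (Y → ℝ) → Y → ℝ} {F : Finset (Y → ℝ)}
    (hw0 : ∀ t, 0 ≤ w t) (hwsupp : Function.support w ⊆ ↑F)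
    (β : (Y → ℝ) → ℝ)
    (hβ : ∀ t ∈ F, w t ≠ 0 → β t ≤ Dk (k t) (fun y => ∑ᶠ s', w s' * k s' y)) :
    ∑ t ∈ F, w t * β t ≤ mutualInfoTY w k := by
  classical
  rw [mi_eq_sum hwsupp]
  apply Finset.sum_le_sum
  intro t ht
  rcases eq_or_ne (w t) 0 with h0 | h0
  · rw [h0, zero_mul]
    apply le_of_eq
    symm
    apply Finset.sum_eq_zero
    intro y _
    split
    · rfl
    · ring
  · have hDk : Dk (k t) (fun y => ∑ᶠ s', w s' * k s' y)
        = ∑ y, if k t y = 0 then 0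
          else k t y * Real.logb 2 (k t y / (∑ᶠ s', w s' * k s' y)) := rfl
    have hG : (∑ y, (if k t y = 0 then 0 else
          w t * k t y * Real.logb 2 (k t y / (∑ᶠ s', w s' * k s' y))))
        = w t * Dk (k t) (fun y => ∑ᶠ s', w s' * k s' y) := by
      rw [hDk, Finset.mul_sum]
      apply Finset.sum_congr rfl
      intro y _
      split
      · rw [mul_zero]
      · ring
    rw [hG]
    exact mul_le_mul_of_nonneg_left (hβ t ht h0) (hw0 t)

lemma pos_pairing {p t : Y → ℝ} (hp : p ∈ probSimplex Y) (ht : ∀ y, 0 < t y) :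
    0 < ∑ y, p y * t y := by
  obtain ⟨y1, hy1⟩ : ∃ y, 0 < p y := by
    by_contra hno
    push_neg at hno
    have hall : ∀ y, p y = 0 := fun y => le_antisymm (hno y) (hp.1 y)
    have h2 := hp.2
    rw [Finset.sum_eq_zero (fun y _ => hall y)] at h2
    norm_num at h2
  have hle : p y1 * t y1 ≤ ∑ y, p y * t y :=
    Finset.single_le_sum (fun y _ => mul_nonneg (hp.1 y) (ht y).le) (Finset.mem_univ y1)
  nlinarith [ht y1]

end Aux

/-- Alternative characterization of the information capacity:
`I(A) = sup_{p_T} inf_{p_{Y|T}} I(T;Y)`, where `p_T` ranges over finitely supported pmfs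
on `A`, and `p_{Y|T}` ranges over kernels with `p_{Y|T}(·|t) ∈ Δ_Y` and
`⟨t, p_{Y|T}(·|t)⟩ ≤ 0` for every `t ∈ A` (the infimum over an empty collection being
`+∞`). -/
theorem infoCap_eq_minimax {Y : Type*} [Fintype Y]
    (A : Set (Y → ℝ)) (hA : IsDCCone A) (hne : A.Nonempty) :
    infoCap A
      = ⨆ pT ∈ finPMFOn A,
          ⨅ k ∈ {k : (Y → ℝ) → Y → ℝ |
              ∀ t ∈ A, k t ∈ probSimplex Y ∧ ∑ y, k t y * t y ≤ 0},
            ((mutualInfoTY pT k : ℝ) : EReal) := by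
  classical
  obtain ⟨a0, ha0⟩ := hne
  have hIC : infoCap A = ⨅ q ∈ probSimplex Y, ⨆ t ∈ A, gE t q := rfl
  set KerS : Set ((Y → ℝ) → Y → ℝ) :=
    {k : (Y → ℝ) → Y → ℝ | ∀ t ∈ A, k t ∈ probSimplex Y ∧ ∑ y, k t y * t y ≤ 0} with hKerS
  -- the point-mass pmf at a0
  have hpT0mem : (fun x => if x = a0 then (1:ℝ) else 0) ∈ finPMFOn A := by
    refine ⟨fun x => by dsimp only; split <;> norm_num, ?_, ?_, ?_⟩
    · apply Set.Finite.subset (Set.finite_singleton a0)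
      intro x hx
      rw [Function.mem_support] at hx
      by_contra hxa
      simp only [Set.mem_singleton_iff] at hxa
      exact hx (if_neg hxa)
    · intro x hx
      rw [Function.mem_support] at hx
      by_cases hxa : x = a0
      · rw [hxa]; exact ha0
      · exact absurd (if_neg hxa) hx
    · rw [finsum_eq_single _ a0 (fun x hx => if_neg hx)]
      exact if_pos rfl
  rcases isEmpty_or_nonempty Y with hY | hY
  · -- Y is empty : both sides are ⊤
    have hΔ : probSimplex Y = ∅ := by
      ext p
      simp only [probSimplex, Set.mem_setOf_eq, Set.mem_empty_iff_false, iff_false]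
      rintro ⟨-, hsum⟩
      rw [Finset.univ_eq_empty, Finset.sum_empty] at hsum
      norm_num at hsum
    have hL : infoCap A = ⊤ := by
      rw [infoCap, hΔ]
      simp
    rw [hL]
    symm
    apply top_unique
    calc (⊤ : EReal)
        ≤ ⨅ k ∈ KerS, ((mutualInfoTY (fun x => if x = a0 then (1:ℝ) else 0) k : ℝ) : EReal) := by
          apply le_iInf₂
          intro k hk
          exact absurd (hk a0 ha0).1 (by rw [hΔ]; exact Set.notMem_empty _)
      _ ≤ _ := le_iSup₂ (f := fun pT (_ : pT ∈ finPMFOn A) =>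
            ⨅ k ∈ KerS, ((mutualInfoTY pT k : ℝ) : EReal)) _ hpT0mem
  by_cases hstrict : ∃ a ∈ A, ∀ y, 0 < a y
  · -- an everywhere-positive element : both sides are ⊤
    obtain ⟨ap, hapA, hap⟩ := hstrict
    have hL : infoCap A = ⊤ := by
      apply top_unique
      rw [hIC]
      apply le_iInf₂
      intro q hq
      refine le_trans ?_ (le_iSup₂ ap hapA)
      apply le_iInf₂
      intro p hp
      exact absurd hp.2 (not_le.mpr (pos_pairing hp.1 hap))
    rw [hL]
    symm
    apply top_unique
    calc (⊤ : EReal)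
        ≤ ⨅ k ∈ KerS, ((mutualInfoTY (fun x => if x = a0 then (1:ℝ) else 0) k : ℝ) : EReal) := by
          apply le_iInf₂
          intro k hk
          exact absurd (hk ap hapA).2 (not_le.mpr (pos_pairing (hk ap hapA).1 hap))
      _ ≤ _ := le_iSup₂ (f := fun pT (_ : pT ∈ finPMFOn A) =>
            ⨅ k ∈ KerS, ((mutualInfoTY pT k : ℝ) : EReal)) _ hpT0mem
  -- main case
  push_neg at hstrict
  have hfeas : ∀ t ∈ A, ∃ y, t y ≤ 0 := fun t ht => hstrict t ht
  have hPt : ∀ t ∈ A, (Pt t).Nonempty := fun t ht => Pt_nonempty (hfeas t ht)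
  have hcardpos : (0:ℝ) < (Fintype.card Y : ℝ) := by exact_mod_cast Fintype.card_pos
  apply le_antisymm
  · -- infoCap A ≤ RHS
    apply IC_le_of_forall_real_lt
    intro c hcL
    apply IC_coe_le_of_forall_sub
    intro e he
    have h2e0 : (0:ℝ) < (2:ℝ)^(-e) := Real.rpow_pos_of_pos (by norm_num) _
    have h2e1 : (2:ℝ)^(-e) < 1 := Real.rpow_lt_one_of_one_lt_of_neg (by norm_num) (by linarith)
    set η : ℝ := 1 - (2:ℝ)^(-e) with hη
    have hη0 : 0 < η := by rw [hη]; linarith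
    have hη1 : η < 1 := by rw [hη]; linarith
    have hlogη : Real.logb 2 (1 - η) = -e := by
      rw [hη, sub_sub_cancel]
      exact Real.logb_rpow (by norm_num) (by norm_num)
    set ε : ℝ := η * (Fintype.card Y : ℝ)⁻¹ with hε
    have hεpos : 0 < ε := by rw [hε]; positivity
    have hKne : (Kset Y ε).Nonempty := by
      refine ⟨fun _ => (Fintype.card Y : ℝ)⁻¹, unif_mem, fun y => ?_⟩
      rw [hε]
      nlinarith [inv_pos.mpr hcardpos]
    have hcov : ∀ q ∈ Kset Y ε, ∃ t ∈ A, c < gR t q := by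
      intro q hq
      have h1 : (c : EReal) < ⨆ t ∈ A, gE t q := by
        refine lt_of_lt_of_le hcL ?_
        rw [hIC]
        exact iInf₂_le q hq.1
      simp only [lt_iSup_iff] at h1
      obtain ⟨t, ht, hlt⟩ := h1
      refine ⟨t, ht, ?_⟩
      rw [gE_coe (hPt t ht) hq.1 (Kset_subset_pos hεpos hq)] at hlt
      exact_mod_cast hlt
    obtain ⟨F, hFA, hFne, hFcov⟩ := exists_cover hεpos hPt hcov hKne
    obtain ⟨w, hw0, hwsuppF, hwsum, hcert⟩ :=
      IC_minimax hεpos hKne (fun t ht => hPt t (hFA ht)) hFcov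
    have hwsupp : Function.support w ⊆ ↑F := by
      intro x hx
      rw [Function.mem_support] at hx
      exact hwsuppF x hx
    have hwA : w ∈ finPMFOn A := by
      refine ⟨hw0, Set.Finite.subset F.finite_toSet hwsupp, fun x hx => hFA (hwsupp hx), ?_⟩
      rw [finsum_eq_sum_of_support_subset w hwsupp]
      exact hwsum
    refine le_trans ?_ (le_iSup₂ w hwA)
    apply le_iInf₂
    intro k hk
    rw [EReal.coe_le_coe_iff]
    have hkA : ∀ t ∈ A, k t ∈ probSimplex Y ∧ ∑ y, k t y * t y ≤ 0 := hk
    have hpYΔ : (fun y => ∑ᶠ s', w s' * k s' y) ∈ probSimplex Y :=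
      marg_mem hw0 hwsupp hwsum (fun t ht => (hkA t (hFA ht)).1)
    set pY : Y → ℝ := fun y => ∑ᶠ s', w s' * k s' y with hpYdef
    set pY' : Y → ℝ := fun y => (1 - η) * pY y + η * (Fintype.card Y : ℝ)⁻¹ with hpY'def
    have hpY'Δ : pY' ∈ probSimplex Y := sm_mem hpYΔ hη0.le hη1.le
    have hpY'K : pY' ∈ Kset Y ε := by
      refine ⟨hpY'Δ, fun y => ?_⟩
      rw [hε]
      exact sm_eps hpYΔ.1 hη1.le y
    have hβ : ∀ t ∈ F, w t ≠ 0 →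
        gR t pY' + Real.logb 2 (1 - η) ≤ Dk (k t) pY := by
      intro t htF hwt
      have htA := hFA htF
      have hktPt : k t ∈ Pt t := ⟨(hkA t htA).1, (hkA t htA).2⟩
      have hsuppc : ∀ y, pY y = 0 → k t y = 0 := by
        intro y hy
        have h1 : ∑ t' ∈ F, w t' * k t' y = 0 := by
          rw [← marg_helper hwsupp y]
          exact hy
        have h2 := (Finset.sum_eq_zero_iff_of_nonneg
          (fun t' ht' => mul_nonneg (hw0 t') ((hkA t' (hFA ht')).1.1 y))).1 h1 t htF
        rcases mul_eq_zero.1 h2 with h | h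
        · exact absurd h hwt
        · exact h
      have hd1 : Dk (k t) pY' ≤ Dk (k t) pY - Real.logb 2 (1 - η) := by
        refine Dk_le_of_le (hkA t htA).1.1 (hkA t htA).1.2 hpYΔ.1
          (show (0:ℝ) < 1 - η by linarith) (fun y => ?_) hsuppc
        rw [hpY'def]
        exact sm_lb hη0.le y
      have hd2 : gR t pY' ≤ Dk (k t) pY' :=
        gR_le_Dk hktPt hpY'Δ (Kset_subset_pos hεpos hpY'K)
      linarith
    have hβlam : ∀ t ∈ F, w t ≠ 0 →
        gR t pY' + Real.logb 2 (1 - η) ≤ Dk (k t) (fun y => ∑ᶠ s', w s' * k s' y) := by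
      intro t htF hwt
      rw [← hpYdef]
      exact hβ t htF hwt
    have hfinal := mi_ge hw0 hwsupp (fun t => gR t pY' + Real.logb 2 (1 - η)) hβlam
    have hsum : ∑ t ∈ F, w t * (gR t pY' + Real.logb 2 (1 - η))
        = (∑ t ∈ F, w t * gR t pY') + Real.logb 2 (1 - η) := by
      rw [Finset.sum_congr rfl (fun t _ => mul_add (w t) _ _), Finset.sum_add_distrib,
        ← Finset.sum_mul, hwsum, one_mul]
    have hcrt := hcert pY' hpY'K
    rw [hlogη] at hsum hfinal
    linarith [hfinal]
  · -- RHS ≤ infoCap A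
    apply iSup₂_le
    intro pT hpT
    apply IC_le_of_forall_real_gt
    intro c hcL
    apply IC_le_coe_of_forall_add
    intro e he
    have h2e0 : (0:ℝ) < (2:ℝ)^(-e) := Real.rpow_pos_of_pos (by norm_num) _
    have h2e1 : (2:ℝ)^(-e) < 1 := Real.rpow_lt_one_of_one_lt_of_neg (by norm_num) (by linarith)
    set η : ℝ := 1 - (2:ℝ)^(-e) with hη
    have hη0 : 0 < η := by rw [hη]; linarith
    have hη1 : η < 1 := by rw [hη]; linarith
    have hlogη : Real.logb 2 (1 - η) = -e := by
      rw [hη, sub_sub_cancel]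
      exact Real.logb_rpow (by norm_num) (by norm_num)
    rw [hIC] at hcL
    simp only [iInf_lt_iff] at hcL
    obtain ⟨q, hqΔ, hqlt⟩ := hcL
    set q' : Y → ℝ := fun y => (1 - η) * q y + η * (Fintype.card Y : ℝ)⁻¹ with hq'def
    have hq'Δ : q' ∈ probSimplex Y := sm_mem hqΔ hη0.le hη1.le
    have hcardpos2 : (0:ℝ) < (Fintype.card Y : ℝ) := by exact_mod_cast Fintype.card_pos
    have hq'pos : ∀ y, 0 < q' y := by
      intro y
      have h1 := sm_eps (q := q) hqΔ.1 hη1.le y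
      have h2 : (0:ℝ) < η * (Fintype.card Y : ℝ)⁻¹ := by positivity
      rw [hq'def]
      linarith
    have hsel : ∀ t ∈ A, ∃ p, p ∈ Pt t ∧ Dk p q' < c + e := by
      intro t htA
      have h1 : gE t q < (c : EReal) :=
        lt_of_le_of_lt (le_iSup₂ (f := fun t (_ : t ∈ A) => gE t q) t htA) hqlt
      rw [gE] at h1
      simp only [iInf_lt_iff] at h1
      obtain ⟨p, hp, hplt⟩ := h1
      have hcond : ∀ y, q y = 0 → p y = 0 := by
        by_contra hnc
        rw [KLdiv, if_neg hnc] at hplt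
        exact absurd hplt (by simp)
      rw [KLdiv_eq_Dk hcond] at hplt
      have hplt' : Dk p q < c := by exact_mod_cast hplt
      refine ⟨p, hp, ?_⟩
      have hd : Dk p q' ≤ Dk p q - Real.logb 2 (1 - η) := by
        refine Dk_le_of_le hp.1.1 hp.1.2 hqΔ.1 (show (0:ℝ) < 1 - η by linarith)
          (fun y => ?_) hcond
        rw [hq'def]
        exact sm_lb hη0.le y
      rw [hlogη] at hd
      linarith
    have hsel' : ∀ t, ∃ p : Y → ℝ, t ∈ A → (p ∈ Pt t ∧ Dk p q' < c + e) := by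
      intro t
      by_cases htA : t ∈ A
      · obtain ⟨p, h1, h2⟩ := hsel t htA
        exact ⟨p, fun _ => ⟨h1, h2⟩⟩
      · exact ⟨fun _ => (Fintype.card Y : ℝ)⁻¹, fun h => absurd h htA⟩
    choose k hk using hsel'
    have hkmem : k ∈ KerS := by
      intro t htA
      exact ⟨(hk t htA).1.1, (hk t htA).1.2⟩
    refine le_trans (iInf₂_le k hkmem) ?_
    rw [EReal.coe_le_coe_iff]
    exact mi_le hpT (fun t ht => (hk t ht).1.1) hq'Δ hq'pos (fun t ht => (hk t ht).2.le)

end
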